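/- Adopt the directional pattern setup and assume additionally that G is even (G(φ) = G(−φ) for all φ) and that Condition (C) holds. For an integer L_0 with 1 ≤ L_0 ≤ L−1, define the equivalent radiation pattern Ḡ(φ, L_0) = (1/L_0)·Σ_{l=0}^{L_0−1} G_l(φ) + (1/(L−L_0))·Σ_{l=L_0}^{L−1} G_l(φ). Then for every integer L_0 with ⌈L/2⌉ < L_0 ≤ L−1, one has inf_{φ ∈ [0, 2π)} Ḡ(φ, L_0) < inf_{φ ∈ [0, 2π)} Ḡ(φ, ⌈L/2⌉). Consequently, L_0 = ⌈L/2⌉ is the unique maximizer of L_0 ↦ inf_{φ ∈ [0, 2π)} Ḡ(φ, L_0) over the integers L_0 with ⌈L/2⌉ ≤ L_0 ≤ L−1; i.e., with a two-port receiver it is optimal to combine ⌈L/2⌉ antennas in one group and ⌊L/2⌋ in the other. -/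

import Mathlib

noncomputable def stmt4dlt (a b p q I GSL : ℝ) : ℝ :=
  (a + b - 1) * I * (p - a) / (a * p) -
    GSL * max (q * max ((1/q - 1/p) - (1/b - 1/a)) 0 - (p - a) / (a * p)) 0

lemma stmt4key_poly (a b p q : ℝ) (hba : b ≤ a) (hq1 : 1 ≤ q)
    (hap : a + 1 ≤ p) (hqb : q + 1 ≤ b) (hsum : p + q = a + b) :
    a*b*(p-q) - p*q*(a-b) - b*(p-a) ≤ (a+b-1)*(p-a)*a := by
  have hq2 : q = a + b - p := by linarith
  subst hq2
  nlinarith [mul_nonneg (mul_nonneg (sub_nonneg.2 hba)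
    (by linarith : (0:ℝ) ≤ p - a)) (by linarith : (0:ℝ) ≤ a + b - p - 1)]

lemma stmt4dlt_pos (a b p q I GSL : ℝ) (hb1 : 1 ≤ b) (hba : b ≤ a)
    (hq1 : 1 ≤ q) (hqb : q + 1 ≤ b) (hap : a + 1 ≤ p) (hsum : p + q = a + b)
    (hG0 : 0 ≤ GSL) (hGI : GSL < b / a * I) :
    0 < stmt4dlt a b p q I GSL := by
  have ha : (0:ℝ) < a := by linarith
  have hb : (0:ℝ) < b := by linarith
  have hp : (0:ℝ) < p := by linarith
  have hq : (0:ℝ) < q := by linarith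
  have hI : 0 < I := by
    by_contra h
    push_neg at h
    have : b / a * I ≤ 0 := mul_nonpos_of_nonneg_of_nonpos (by positivity) h
    linarith
  have hd1 : 0 < (a + b - 1) * I * (p - a) / (a * p) :=
    div_pos (mul_pos (mul_pos (by linarith) hI) (by linarith)) (by positivity)
  unfold stmt4dlt
  rcases le_or_gt ((1/q - 1/p) - (1/b - 1/a)) 0 with hX0 | hX0
  · rw [max_eq_right hX0]
    have h2 : q * 0 - (p - a) / (a * p) ≤ 0 := by
      have : 0 ≤ (p - a) / (a * p) := div_nonneg (by linarith) (by positivity)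
      linarith
    rw [max_eq_right h2]
    simpa using hd1
  · rw [max_eq_left hX0.le]
    rcases le_or_gt (q * ((1/q - 1/p) - (1/b - 1/a)) - (p - a) / (a * p)) 0 with hK0 | hK0
    · rw [max_eq_right hK0]
      simpa using hd1
    · rw [max_eq_left hK0.le]
      have h0 := stmt4key_poly a b p q hba hq1 hap hqb hsum
      have hfr : (a + b - 1) * (p - a) / (a * p)
          - b / a * (q * ((1/q - 1/p) - (1/b - 1/a)) - (p - a) / (a * p))
          = ((a + b - 1) * (p - a) * a
              - (a * b * (p - q) - p * q * (a - b) - b * (p - a))) / (a^2 * p) := by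
        field_simp
      have hkey : b / a * (q * ((1/q - 1/p) - (1/b - 1/a)) - (p - a) / (a * p))
          ≤ (a + b - 1) * (p - a) / (a * p) := by
        have h5 : 0 ≤ ((a + b - 1) * (p - a) * a
            - (a * b * (p - q) - p * q * (a - b) - b * (p - a))) / (a^2 * p) :=
          div_nonneg (by linarith) (by positivity)
        linarith [hfr ▸ h5]
      have h1 : GSL * (q * ((1/q - 1/p) - (1/b - 1/a)) - (p - a) / (a * p))
          < (b / a * I) * (q * ((1/q - 1/p) - (1/b - 1/a)) - (p - a) / (a * p)) :=
        mul_lt_mul_of_pos_right hGI hK0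
      have h2 : (b / a * I) * (q * ((1/q - 1/p) - (1/b - 1/a)) - (p - a) / (a * p))
          ≤ (a + b - 1) * I * (p - a) / (a * p) := by
        have e : (b / a * I) * (q * ((1/q - 1/p) - (1/b - 1/a)) - (p - a) / (a * p))
            = I * (b / a * (q * ((1/q - 1/p) - (1/b - 1/a)) - (p - a) / (a * p))) := by ring
        rw [e]
        calc I * (b / a * (q * ((1/q - 1/p) - (1/b - 1/a)) - (p - a) / (a * p)))
            ≤ I * ((a + b - 1) * (p - a) / (a * p)) := mul_le_mul_of_nonneg_left hkey hI.le
          _ = (a + b - 1) * I * (p - a) / (a * p) := by ring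
      linarith

lemma stmt4chain (a b p q I GSL μ θ B bb S : ℝ) (hb1 : 1 ≤ b) (hba : b ≤ a)
    (hq1 : 1 ≤ q) (hqb : q + 1 ≤ b) (hap : a + 1 ≤ p) (hsum : p + q = a + b)
    (hG0 : 0 ≤ GSL) (hI : 0 < I)
    (hS : (a + b - 1) * I + μ ≤ S)
    (hμ0 : 0 ≤ μ) (hμG : μ ≤ GSL)
    (hθ0 : 0 ≤ θ) (hθB : θ ≤ B) (hbb0 : 0 ≤ bb)
    (hcase : (θ ≤ q * μ ∧ bb ≤ θ) ∨ (q * μ ≤ θ ∧ bb ≤ q * μ)) :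
    (S - bb)/p + bb/q + stmt4dlt a b p q I GSL ≤ (S - B)/a + B/b := by
  have ha : (0:ℝ) < a := by linarith
  have hb : (0:ℝ) < b := by linarith
  have hp : (0:ℝ) < p := by linarith
  have hq : (0:ℝ) < q := by linarith
  have hqp : q ≤ p := by linarith
  set c : ℝ := 1/q - 1/p with hc
  set Y : ℝ := 1/b - 1/a with hY
  set X : ℝ := c - Y with hX
  set Xp : ℝ := max X 0 with hXp
  set K : ℝ := q * Xp - (p - a) / (a * p) with hK
  set Kp : ℝ := max K 0 with hKp
  set d1 : ℝ := (a + b - 1) * I * (p - a) / (a * p) with hd1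
  have hdlt : stmt4dlt a b p q I GSL = d1 - GSL * Kp := rfl
  clear_value c Y X Xp K Kp d1
  have hc0 : 0 ≤ c := by
    rw [hc]
    have := one_div_le_one_div_of_le hq hqp
    linarith
  have hY0 : 0 ≤ Y := by
    rw [hY]
    have := one_div_le_one_div_of_le hb hba
    linarith
  have hXp0 : 0 ≤ Xp := hXp ▸ le_max_right _ _
  have hKp0 : 0 ≤ Kp := hKp ▸ le_max_right _ _
  have hXXp : X ≤ Xp := hXp ▸ le_max_left _ _
  have e1 : (S - bb)/p + bb/q = S/p + bb * c := by
    rw [hc]; field_simp; ring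
  have e2 : (S - B)/a + B/b = S/a + B * Y := by
    rw [hY]; field_simp; ring
  have h3 : θ * Y ≤ B * Y := mul_le_mul_of_nonneg_right hθB hY0
  have h4 : bb * c ≤ θ * Y + (q * μ) * Xp := by
    rcases hcase with ⟨hθq, hbθ⟩ | ⟨hθq, hbθ⟩
    · have s1 : bb * c ≤ θ * c := mul_le_mul_of_nonneg_right hbθ hc0
      have s2 : θ * c = θ * Y + θ * X := by rw [hX]; ring
      have s3 : θ * X ≤ θ * Xp := mul_le_mul_of_nonneg_left hXXp hθ0
      have s4 : θ * Xp ≤ (q * μ) * Xp := mul_le_mul_of_nonneg_right hθq hXp0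
      linarith
    · have s1 : bb * c ≤ (q * μ) * c := mul_le_mul_of_nonneg_right hbθ hc0
      have s2 : (q * μ) * c = (q * μ) * Y + (q * μ) * X := by rw [hX]; ring
      have s3 : (q * μ) * X ≤ (q * μ) * Xp :=
        mul_le_mul_of_nonneg_left hXXp (by positivity)
      have s4 : (q * μ) * Y ≤ θ * Y := mul_le_mul_of_nonneg_right hθq hY0
      linarith
  have h5 : (q * μ) * Xp + (d1 - GSL * Kp) ≤ S/a - S/p := by
    have g1 : S/a - S/p = S * (p - a) / (a * p) := by field_simp
    have g2 : ((a + b - 1) * I + μ) * (p - a) / (a * p) ≤ S * (p - a) / (a * p) := by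
      apply div_le_div_of_nonneg_right ?_ (by positivity)
      exact mul_le_mul_of_nonneg_right hS (by linarith)
    have g3 : ((a + b - 1) * I + μ) * (p - a) / (a * p)
        = d1 + μ * ((p - a) / (a * p)) := by rw [hd1]; ring
    have g4 : μ * K ≤ GSL * Kp := by
      rcases le_or_gt K 0 with h | h
      · have : μ * K ≤ 0 := mul_nonpos_of_nonneg_of_nonpos hμ0 h
        have : (0:ℝ) ≤ GSL * Kp := mul_nonneg hG0 hKp0
        linarith
      · have hKpK : Kp = K := by rw [hKp]; exact max_eq_left h.le
        rw [hKpK]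
        exact mul_le_mul_of_nonneg_right hμG h.le
    have g5 : (q * μ) * Xp = μ * K + μ * ((p - a) / (a * p)) := by
      rw [hK]; ring
    linarith
  linarith

set_option maxHeartbeats 1000000 in
theorem stmt4
(L : ℕ) (hL : 2 ≤ L)
    (G : ℝ → ℝ) (hGnn : ∀ φ, 0 ≤ G φ)
    (hGper : ∀ φ, G (φ + 2 * Real.pi) = G φ)
    (GSL φB : ℝ) (hGSL : 0 ≤ GSL)
    (hφB0 : 0 < φB) (hφBhalf : φB < Real.pi / 2)
    (hmain : ∀ φ ∈ Set.Ioo (-φB) φB, GSL < G φ)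
    (hside : ∀ φ : ℝ, φB ≤ |φ| → |φ| ≤ Real.pi → G φ ≤ GSL)
    (Gl : ℕ → ℝ → ℝ)
    (hGl : ∀ l φ, Gl l φ = G (φ - l * (2 * Real.pi) / L))
    (hGeven : ∀ φ, G (-φ) = G φ)
-- Condition (C)
    (hC : GSL < ((L / 2 : ℕ) : ℝ) / (((L + 1) / 2 : ℕ) : ℝ) *
      sInf ((fun φ => (1 / ((L : ℝ) - 1)) * ∑ l ∈ Finset.range (L - 1), Gl l φ) ''
        Set.Icc (φB - 2 * Real.pi / L) (((L : ℝ) - 1) * (2 * Real.pi) / L - φB)))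
(Gbar : ℕ → ℝ → ℝ)
    (hGbar : ∀ L0 φ, Gbar L0 φ =
      (1 / (L0 : ℝ)) * ∑ l ∈ Finset.range L0, Gl l φ +
      (1 / ((L : ℝ) - L0)) * ∑ l ∈ Finset.Ico L0 L, Gl l φ) :
    ∀ L0 : ℕ, (L + 1) / 2 < L0 → L0 ≤ L - 1 →
      sInf (Gbar L0 '' Set.Ico (0:ℝ) (2 * Real.pi)) <
      sInf (Gbar ((L + 1) / 2) '' Set.Ico (0:ℝ) (2 * Real.pi)) := by
  intro L0 hL0 hL0'
  have pi_pos := Real.pi_pos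
  set M : ℕ := (L + 1) / 2 with hM
  set m : ℕ := L / 2 with hm
  set L1 : ℕ := L - L0 with hL1
  have hMm : M + m = L := by omega
  have h1m : 1 ≤ m := by omega
  have hmM : m ≤ M := by omega
  have hL11 : 1 ≤ L1 := by omega
  have hL1m : L1 + 1 ≤ m := by omega
  have hM1L0 : M + 1 ≤ L0 := by omega
  have hL0L1 : L0 + L1 = L := by omega
  have hL0L : L0 ≤ L := by omega
  have hML : M < L := by omega
  have h2M : L ≤ 2 * M := by omega
  have hLpos : (0:ℝ) < L := by exact_mod_cast (by omega : 0 < L)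
  have hL2R : (2:ℝ) ≤ (L:ℝ) := by exact_mod_cast hL
  have hbR : (1:ℝ) ≤ (m:ℝ) := by exact_mod_cast h1m
  have hbaR : (m:ℝ) ≤ (M:ℝ) := by exact_mod_cast hmM
  have hq1R : (1:ℝ) ≤ (L1:ℝ) := by exact_mod_cast hL11
  have hqbR : (L1:ℝ) + 1 ≤ (m:ℝ) := by exact_mod_cast hL1m
  have hapR : (M:ℝ) + 1 ≤ (L0:ℝ) := by exact_mod_cast hM1L0
  have hLMm : (L:ℝ) = (M:ℝ) + (m:ℝ) := by exact_mod_cast hMm.symm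
  have hLL0L1 : (L:ℝ) = (L0:ℝ) + (L1:ℝ) := by exact_mod_cast hL0L1.symm
  have hsumR : (L0:ℝ) + (L1:ℝ) = (M:ℝ) + (m:ℝ) := by linarith
  have h2MR : (L:ℝ) ≤ 2 * (M:ℝ) := by exact_mod_cast h2M
  -- the infimum in condition C
  set Iv : ℝ := sInf ((fun φ => (1 / ((L : ℝ) - 1)) * ∑ l ∈ Finset.range (L - 1), Gl l φ) ''
      Set.Icc (φB - 2 * Real.pi / L) (((L : ℝ) - 1) * (2 * Real.pi) / L - φB)) with hIv
  have hCI : GSL < (m:ℝ) / (M:ℝ) * Iv := hC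
  have hIpos : 0 < Iv := by
    by_contra h
    push_neg at h
    have h1 : (0:ℝ) < (m:ℝ) / (M:ℝ) := by
      apply div_pos (by linarith) (by linarith)
    nlinarith
  have hbddf : BddBelow ((fun φ => (1 / ((L : ℝ) - 1)) * ∑ l ∈ Finset.range (L - 1), Gl l φ) ''
      Set.Icc (φB - 2 * Real.pi / L) (((L : ℝ) - 1) * (2 * Real.pi) / L - φB)) := by
    refine ⟨0, fun x hx => ?_⟩
    obtain ⟨φ', -, rfl⟩ := hx
    have h1 : (0:ℝ) ≤ 1 / ((L:ℝ) - 1) := by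
      apply one_div_nonneg.2; linarith
    exact mul_nonneg h1 (Finset.sum_nonneg fun l _ => by rw [hGl]; exact hGnn _)
  have hIle : ∀ φ' ∈ Set.Icc (φB - 2 * Real.pi / L) (((L : ℝ) - 1) * (2 * Real.pi) / L - φB),
      Iv ≤ (1 / ((L : ℝ) - 1)) * ∑ l ∈ Finset.range (L - 1), Gl l φ' := by
    intro φ' h
    exact csInf_le hbddf ⟨φ', h, rfl⟩
  clear_value Iv
  -- delta
  have hδpos : 0 < stmt4dlt (M:ℝ) (m:ℝ) (L0:ℝ) (L1:ℝ) Iv GSL :=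
    stmt4dlt_pos _ _ _ _ _ _ hbR hbaR hq1R hqbR hapR hsumR hGSL hCI
  set δ : ℝ := stmt4dlt (M:ℝ) (m:ℝ) (L0:ℝ) (L1:ℝ) Iv GSL with hδ
  -- get near-minimizer φ₀
  have hne : (Gbar M '' Set.Ico (0:ℝ) (2 * Real.pi)).Nonempty :=
    ⟨Gbar M 0, ⟨0, ⟨le_refl 0, Real.two_pi_pos⟩, rfl⟩⟩
  obtain ⟨y, hy, hylt⟩ := exists_lt_of_csInf_lt hne
    (lt_add_of_pos_right (sInf (Gbar M '' Set.Ico (0:ℝ) (2 * Real.pi))) hδpos)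
  obtain ⟨φ₀, hφ₀mem, rfl⟩ := hy
  -- beam values around φ₀
  set g : ℤ → ℝ := fun j => G (φ₀ - (j:ℝ) * (2 * Real.pi) / L) with hg
  set w : ℤ → ℕ → ℝ := fun a n => ∑ i ∈ Finset.range n, g (a + (i:ℤ)) with hw
  have hgnn : ∀ j, 0 ≤ g j := fun j => by simp only [hg]; exact hGnn _
  have hwnn : ∀ a n, 0 ≤ w a n := fun a n => by
    simp only [hw]; exact Finset.sum_nonneg fun i _ => hgnn _
  have hgper : ∀ j : ℤ, g (j + L) = g j := by
    intro j
    simp only [hg]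
    have h1 : φ₀ - ((j + (L:ℤ) : ℤ):ℝ) * (2 * Real.pi) / L
        = (φ₀ - (j:ℝ) * (2 * Real.pi) / L) - 2 * Real.pi := by
      push_cast
      field_simp
      ring
    rw [h1]
    have h2 := hGper (φ₀ - (j:ℝ) * (2 * Real.pi) / L - 2 * Real.pi)
    have h3 : φ₀ - (j:ℝ) * (2 * Real.pi) / L - 2 * Real.pi + 2 * Real.pi
        = φ₀ - (j:ℝ) * (2 * Real.pi) / L := by ring
    rw [h3] at h2
    exact h2.symm
  have hwadd : ∀ (a : ℤ) (n₁ n₂ : ℕ), w a (n₁ + n₂) = w a n₁ + w (a + (n₁:ℤ)) n₂ := by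
    intro a n₁ n₂
    induction n₂ with
    | zero => simp [hw]
    | succ k ih =>
      have e1 : n₁ + (k + 1) = (n₁ + k) + 1 := rfl
      rw [e1]
      have e2 : w a (n₁ + k + 1) = w a (n₁ + k) + g (a + (↑(n₁ + k):ℤ)) := by
        simp only [hw, Finset.sum_range_succ]
      have e3 : w (a + (n₁:ℤ)) (k + 1) = w (a + (n₁:ℤ)) k + g (a + (n₁:ℤ) + (k:ℤ)) := by
        simp only [hw, Finset.sum_range_succ]
      have e4 : a + (↑(n₁ + k):ℤ) = a + (n₁:ℤ) + (k:ℤ) := by push_cast; ring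
      rw [e2, ih, e3, e4]
      ring
  have hwper : ∀ (a : ℤ) (n : ℕ), w (a + L) n = w a n := by
    intro a n
    simp only [hw]
    refine Finset.sum_congr rfl fun i _ => ?_
    have e : a + (L:ℤ) + (i:ℤ) = (a + i) + L := by ring
    rw [e, hgper]
  have hw1 : ∀ x : ℤ, w x 1 = g x := by intro x; simp [hw]
  have hwshift : ∀ a : ℤ, w (a + 1) L = w a L := by
    intro a
    have hA := hwadd a 1 (L-1)
    simp only [Nat.cast_one] at hA
    rw [show 1 + (L-1) = L from by omega] at hA
    have hB := hwadd (a+1) (L-1) 1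
    rw [show (L-1) + 1 = L from by omega] at hB
    rw [hB, hw1, show a + 1 + (↑(L-1):ℤ) = a + L from by omega, hgper, hA, hw1]
    ring
  have hwL : ∀ a : ℤ, w a L = w 0 L := by
    intro a
    induction a using Int.induction_on with
    | zero => rfl
    | succ i ih => rw [hwshift]; exact ih
    | pred i ih =>
      have h1 := hwshift (-(i:ℤ) - 1)
      rw [show (-(i:ℤ) - 1) + 1 = -(i:ℤ) from by ring] at h1
      rw [← h1]; exact ih
  set S : ℝ := w 0 L with hSdef
  -- sum conversions
  have hRange : ∀ (n : ℕ) (k : ℤ),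
      (∑ l ∈ Finset.range n, Gl l (φ₀ + (k:ℝ) * (2 * Real.pi) / L)) = w (-k) n := by
    intro n k
    simp only [hw]
    refine Finset.sum_congr rfl fun l _ => ?_
    rw [hGl]
    simp only [hg]
    congr 1
    push_cast
    ring
  have hIcoSum : ∀ (n : ℕ), n ≤ L → ∀ (k : ℤ),
      (∑ l ∈ Finset.Ico n L, Gl l (φ₀ + (k:ℝ) * (2 * Real.pi) / L)) = w ((n:ℤ) - k) (L - n) := by
    intro n hn k
    rw [Finset.sum_Ico_eq_sum_range]
    simp only [hw]
    refine Finset.sum_congr rfl fun i _ => ?_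
    rw [hGl]
    simp only [hg]
    congr 1
    push_cast
    ring
  have hEval : ∀ (n : ℕ), n ≤ L → ∀ k : ℤ, Gbar n (φ₀ + (k:ℝ) * (2 * Real.pi) / L)
      = (1/(n:ℝ)) * w (-k) n + (1/((L:ℝ) - n)) * w ((n:ℤ) - k) (L - n) := by
    intro n hn k
    rw [hGbar, hRange n k, hIcoSum n hn k]
  -- J-window facts
  have hJ : ∀ k : ℤ, φB - 2 * Real.pi / L ≤ φ₀ + (k:ℝ) * (2 * Real.pi) / L →
      φ₀ + (k:ℝ) * (2 * Real.pi) / L ≤ ((L:ℝ) - 1) * (2 * Real.pi) / L - φB →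
      g ((L:ℤ) - 1 - k) ≤ GSL ∧ ((L:ℝ) - 1) * Iv ≤ S - g ((L:ℤ) - 1 - k) := by
    intro k hklo hkhi
    have hgx : g ((L:ℤ) - 1 - k)
        = G (φ₀ + (k:ℝ) * (2 * Real.pi) / L - ((L:ℝ) - 1) * (2 * Real.pi) / L) := by
      simp only [hg]
      congr 1
      push_cast
      ring
    constructor
    · set x : ℝ := φ₀ + (k:ℝ) * (2 * Real.pi) / L - ((L:ℝ) - 1) * (2 * Real.pi) / L with hx
      have hxup : x ≤ -φB := by rw [hx]; linarith
      have hxlo : φB - 2 * Real.pi ≤ x := by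
        have e : 2 * Real.pi / L + ((L:ℝ) - 1) * (2 * Real.pi) / L = 2 * Real.pi := by
          field_simp
          ring
        rw [hx]; linarith
      rw [hgx]
      rcases le_or_gt (-Real.pi) x with hcase | hcase
      · apply hside
        · rw [abs_of_nonpos (by linarith)]; linarith
        · rw [abs_of_nonpos (by linarith)]; linarith
      · have h2 := hGper x
        rw [← h2]
        apply hside
        · rw [abs_of_nonneg (by linarith)]; linarith
        · rw [abs_of_nonneg (by linarith)]; linarith
    · have h1 := hIle _ ⟨hklo, hkhi⟩
      rw [hRange (L-1) k] at h1
      have hsplit : S = w (-k) (L-1) + g ((L:ℤ) - 1 - k) := by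
        have hA := hwadd (-k) (L-1) 1
        rw [show (L-1) + 1 = L from by omega, hw1,
          show -k + (↑(L-1):ℤ) = (L:ℤ) - 1 - k from by omega] at hA
        exact hSdef.trans ((hwL (-k)).symm.trans hA)
      have hL1R : (0:ℝ) < (L:ℝ) - 1 := by linarith
      have h2 : ((L:ℝ) - 1) * Iv ≤ w (-k) (L-1) := by
        rw [one_div_mul_eq_div] at h1
        have := (le_div_iff₀ hL1R).1 h1
        linarith
      linarith
  -- the k₀ shift: m consecutive window positions inside J
  have hΔpos : (0:ℝ) < 2 * Real.pi / L := by positivity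
  set k₀ : ℤ := ⌈(φB - 2 * Real.pi / L - φ₀) / (2 * Real.pi / L)⌉ with hk₀
  have hk₀lo : φB - 2 * Real.pi / L ≤ φ₀ + (k₀:ℝ) * (2 * Real.pi) / L := by
    have h1 := Int.le_ceil ((φB - 2 * Real.pi / L - φ₀) / (2 * Real.pi / L))
    rw [div_le_iff₀ hΔpos] at h1
    rw [show (k₀:ℝ) * (2 * Real.pi / L) = (k₀:ℝ) * (2 * Real.pi) / L from by ring] at h1
    linarith
  have hk₀hi : φ₀ + (k₀:ℝ) * (2 * Real.pi) / L < φB := by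
    have h1 := Int.ceil_lt_add_one ((φB - 2 * Real.pi / L - φ₀) / (2 * Real.pi / L))
    have h2 : (k₀:ℝ) * (2 * Real.pi / L)
        < ((φB - 2 * Real.pi / L - φ₀) / (2 * Real.pi / L) + 1) * (2 * Real.pi / L) :=
      mul_lt_mul_of_pos_right h1 hΔpos
    rw [add_mul, div_mul_cancel₀ _ (ne_of_gt hΔpos)] at h2
    rw [show (k₀:ℝ) * (2 * Real.pi / L) = (k₀:ℝ) * (2 * Real.pi) / L from by ring] at h2
    linarith
  clear_value k₀
  have hMΔ : Real.pi ≤ (M:ℝ) * (2 * Real.pi) / L := by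
    rw [le_div_iff₀ hLpos]
    linarith [mul_le_mul_of_nonneg_left h2MR Real.pi_pos.le]
  have hkJ : ∀ j : ℤ, 0 ≤ j → j ≤ (m:ℤ) - 1 →
      (φB - 2 * Real.pi / L ≤ φ₀ + ((k₀ + j : ℤ):ℝ) * (2 * Real.pi) / L ∧
       φ₀ + ((k₀ + j : ℤ):ℝ) * (2 * Real.pi) / L ≤ ((L:ℝ) - 1) * (2 * Real.pi) / L - φB) := by
    intro j hj0 hjm
    have hjR : (0:ℝ) ≤ (j:ℝ) := by exact_mod_cast hj0
    have hjmR : (j:ℝ) ≤ (m:ℝ) - 1 := by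
      have : (j:ℝ) ≤ ((m:ℤ) - 1 : ℤ) := by exact_mod_cast hjm
      push_cast at this
      linarith
    have e : ((k₀ + j : ℤ):ℝ) * (2 * Real.pi) / L
        = (k₀:ℝ) * (2 * Real.pi) / L + (j:ℝ) * (2 * Real.pi) / L := by
      push_cast
      ring
    constructor
    · rw [e]
      have : (0:ℝ) ≤ (j:ℝ) * (2 * Real.pi) / L := by positivity
      linarith
    · rw [e]
      have h3 : (j:ℝ) * (2 * Real.pi) / L ≤ ((m:ℝ) - 1) * (2 * Real.pi) / L :=
        (div_le_div_iff_of_pos_right hLpos).2 (by nlinarith)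
      have e2 : ((L:ℝ) - 1) * (2 * Real.pi) / L - ((m:ℝ) - 1) * (2 * Real.pi) / L
          = (M:ℝ) * (2 * Real.pi) / L := by
        rw [hLMm]; ring
      linarith
  -- the low window: m consecutive beams with small values
  set μ : ℝ := min GSL (S - ((L:ℝ) - 1) * Iv) with hμ
  have hΩ : ∀ i : ℕ, i < m → g ((L:ℤ) - k₀ - (m:ℤ) + (i:ℤ)) ≤ μ := by
    intro i hi
    have hj0 : (0:ℤ) ≤ (m:ℤ) - 1 - (i:ℤ) := by omega
    have hjm : (m:ℤ) - 1 - (i:ℤ) ≤ (m:ℤ) - 1 := by omega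
    obtain ⟨c1, c2⟩ := hkJ ((m:ℤ) - 1 - (i:ℤ)) hj0 hjm
    have h1 := hJ (k₀ + ((m:ℤ) - 1 - (i:ℤ))) c1 c2
    have hidx : (L:ℤ) - 1 - (k₀ + ((m:ℤ) - 1 - (i:ℤ))) = (L:ℤ) - k₀ - (m:ℤ) + (i:ℤ) := by ring
    rw [hidx] at h1
    exact le_min h1.1 (by linarith [h1.2])
  have hμ0 : 0 ≤ μ := by
    obtain ⟨c1, c2⟩ := hkJ 0 le_rfl (by omega)
    have h1 := hJ (k₀ + 0) c1 c2
    exact le_min hGSL (by linarith [h1.2, hgnn ((L:ℤ) - 1 - (k₀ + 0))])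
  have hμS : ((L:ℝ) - 1) * Iv + μ ≤ S := by
    have := min_le_right GSL (S - ((L:ℝ) - 1) * Iv)
    rw [← hμ] at this
    linarith
  -- the minimizing m-window
  obtain ⟨cs, hcsmem, hcsmin⟩ := Finset.exists_min_image (Finset.range L)
    (fun c : ℕ => w (c:ℤ) m) ⟨0, Finset.mem_range.2 (by omega)⟩
  set θ : ℝ := w ((cs:ℕ):ℤ) m with hθdef
  have hθB : θ ≤ w ((M:ℕ):ℤ) m := hcsmin M (Finset.mem_range.2 hML)
  have hsubθ : w ((cs:ℕ):ℤ) L1 ≤ θ := by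
    have hA := hwadd ((cs:ℕ):ℤ) L1 (m - L1)
    rw [show L1 + (m - L1) = m from by omega] at hA
    rw [hθdef, hA]
    linarith [hwnn (((cs:ℕ):ℤ) + (L1:ℤ)) (m - L1)]
  -- evaluation of Gbar M at φ₀
  have hφ0e : φ₀ = φ₀ + ((0:ℤ):ℝ) * (2 * Real.pi) / L := by push_cast; ring
  have hwM : w (-(0:ℤ)) M = S - w ((M:ℕ):ℤ) m := by
    have hA := hwadd 0 M m
    rw [hMm] at hA
    rw [hSdef, hA]
    simp
  have hLMR : (L:ℝ) - (M:ℝ) = (m:ℝ) := by linarith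
  have hGbarM : Gbar M φ₀ = (S - w ((M:ℕ):ℤ) m) / (M:ℝ) + (w ((M:ℕ):ℤ) m) / (m:ℝ) := by
    conv_lhs => rw [hφ0e]
    rw [hEval M (le_of_lt hML) 0]
    rw [hwM, show L - M = m from by omega, hLMR]
    rw [show ((M:ℕ):ℤ) - (0:ℤ) = ((M:ℕ):ℤ) from by ring]
    rw [one_div_mul_eq_div, one_div_mul_eq_div]
  -- choose the window for the unbalanced grouping
  suffices hsuff : ∃ pstart : ℤ,
      ((θ ≤ (L1:ℝ) * μ ∧ w pstart L1 ≤ θ) ∨ ((L1:ℝ) * μ ≤ θ ∧ w pstart L1 ≤ (L1:ℝ) * μ)) by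
    obtain ⟨pstart, hcase⟩ := hsuff
    obtain ⟨ψ, hψdef⟩ : ∃ ψ : ℝ, ψ = φ₀ + (((L0:ℤ) - pstart : ℤ):ℝ) * (2 * Real.pi) / L :=
      ⟨_, rfl⟩
    have hψeval : Gbar L0 ψ = (S - w pstart L1) / (L0:ℝ) + (w pstart L1) / (L1:ℝ) := by
      rw [hψdef, hEval L0 hL0L ((L0:ℤ) - pstart)]
      rw [show ((L0:ℕ):ℤ) - ((L0:ℤ) - pstart) = pstart from by ring]
      rw [show L - L0 = L1 from by omega]
      rw [show -((L0:ℤ) - pstart) = pstart - (L0:ℤ) from by ring]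
      have hcomp : w (pstart - (L0:ℤ)) L0 = S - w pstart L1 := by
        have hA := hwadd pstart L1 L0
        rw [show L1 + L0 = L from by omega] at hA
        have hper2 : w (pstart + (L1:ℤ)) L0 = w (pstart - (L0:ℤ)) L0 := by
          rw [show pstart + ((L1:ℕ):ℤ) = (pstart - (L0:ℤ)) + (L:ℤ) from by omega, hwper]
        rw [hper2] at hA
        have h1 : S = w pstart L1 + w (pstart - (L0:ℤ)) L0 :=
          hSdef.trans ((hwL pstart).symm.trans hA)
        linarith
      rw [hcomp]
      rw [show (L:ℝ) - (L0:ℝ) = (L1:ℝ) from by linarith]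
      rw [one_div_mul_eq_div, one_div_mul_eq_div]
    have hchain := stmt4chain (M:ℝ) (m:ℝ) (L0:ℝ) (L1:ℝ) Iv GSL μ θ
      (w ((M:ℕ):ℤ) m) (w pstart L1) S
      hbR hbaR hq1R hqbR hapR hsumR hGSL hIpos
      (by rw [show (M:ℝ) + (m:ℝ) - 1 = (L:ℝ) - 1 from by linarith]; exact hμS)
      hμ0 (min_le_left _ _) (hwnn _ _) hθB (hwnn _ _) hcase
    rw [← hδ] at hchain
    have hlt : Gbar L0 ψ < sInf (Gbar M '' Set.Ico (0:ℝ) (2 * Real.pi)) := by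
      rw [hψeval]
      rw [hGbarM] at hylt
      linarith
    -- periodicity of Gbar L0
    have hGz : ∀ (z : ℤ) (x : ℝ), G (x + (z:ℝ) * (2 * Real.pi)) = G x := by
      intro z
      induction z using Int.induction_on with
      | zero => intro x; norm_num
      | succ i ih =>
        intro x
        have e : x + (((i:ℤ) + 1 : ℤ):ℝ) * (2 * Real.pi)
            = (x + ((i:ℤ):ℝ) * (2 * Real.pi)) + 2 * Real.pi := by push_cast; ring
        rw [e, hGper, ih]
      | pred i ih =>
        intro x
        have h2 := hGper (x + ((-(i:ℤ) - 1 : ℤ):ℝ) * (2 * Real.pi))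
        have e : x + ((-(i:ℤ) - 1 : ℤ):ℝ) * (2 * Real.pi) + 2 * Real.pi
            = x + ((-(i:ℤ) : ℤ):ℝ) * (2 * Real.pi) := by push_cast; ring
        rw [e] at h2
        exact h2.symm.trans (ih x)
    have hGbarPer : ∀ (z : ℤ) (x : ℝ), Gbar L0 (x - (z:ℝ) * (2 * Real.pi)) = Gbar L0 x := by
      intro z x
      rw [hGbar, hGbar]
      congr 1
      · congr 1
        refine Finset.sum_congr rfl fun l _ => ?_
        rw [hGl, hGl]
        rw [show x - (z:ℝ) * (2 * Real.pi) - (l:ℝ) * (2 * Real.pi) / L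
            = (x - (l:ℝ) * (2 * Real.pi) / L) + ((-z : ℤ):ℝ) * (2 * Real.pi) from by
          push_cast; ring]
        rw [hGz]
      · congr 1
        refine Finset.sum_congr rfl fun l _ => ?_
        rw [hGl, hGl]
        rw [show x - (z:ℝ) * (2 * Real.pi) - (l:ℝ) * (2 * Real.pi) / L
            = (x - (l:ℝ) * (2 * Real.pi) / L) + ((-z : ℤ):ℝ) * (2 * Real.pi) from by
          push_cast; ring]
        rw [hGz]
    have hbdd0 : BddBelow (Gbar L0 '' Set.Ico (0:ℝ) (2 * Real.pi)) := by
      refine ⟨0, fun x hx => ?_⟩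
      obtain ⟨φ', -, rfl⟩ := hx
      rw [hGbar]
      have hA : (0:ℝ) ≤ 1/(L0:ℝ) := by positivity
      have hBn : (0:ℝ) ≤ 1/((L:ℝ) - L0) := by
        rw [show (L:ℝ) - (L0:ℝ) = (L1:ℝ) from by linarith]
        positivity
      exact add_nonneg
        (mul_nonneg hA (Finset.sum_nonneg fun l _ => by rw [hGl]; exact hGnn _))
        (mul_nonneg hBn (Finset.sum_nonneg fun l _ => by rw [hGl]; exact hGnn _))
    have hψ'mem : toIcoMod Real.two_pi_pos 0 ψ ∈ Set.Ico (0:ℝ) (2 * Real.pi) := by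
      have h1 := toIcoMod_mem_Ico Real.two_pi_pos 0 ψ
      rwa [zero_add] at h1
    have hψ'eq : Gbar L0 (toIcoMod Real.two_pi_pos 0 ψ) = Gbar L0 ψ := by
      have e : toIcoMod Real.two_pi_pos 0 ψ
          = ψ - ((toIcoDiv Real.two_pi_pos 0 ψ : ℤ):ℝ) * (2 * Real.pi) := by
        rw [toIcoMod, zsmul_eq_mul]
      rw [e]
      exact hGbarPer _ _
    calc sInf (Gbar L0 '' Set.Ico (0:ℝ) (2 * Real.pi))
        ≤ Gbar L0 (toIcoMod Real.two_pi_pos 0 ψ) := csInf_le hbdd0 ⟨_, hψ'mem, rfl⟩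
      _ = Gbar L0 ψ := hψ'eq
      _ < sInf (Gbar M '' Set.Ico (0:ℝ) (2 * Real.pi)) := hlt
  rcases le_or_gt θ ((L1:ℝ) * μ) with hcs1 | hcs1
  · exact ⟨((cs:ℕ):ℤ), Or.inl ⟨hcs1, hsubθ⟩⟩
  · refine ⟨(L:ℤ) - k₀ - (m:ℤ), Or.inr ⟨hcs1.le, ?_⟩⟩
    calc w ((L:ℤ) - k₀ - (m:ℤ)) L1 ≤ ∑ _i ∈ Finset.range L1, μ := by
          simp only [hw]
          exact Finset.sum_le_sum fun i hiL1 => hΩ i (by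
            have := Finset.mem_range.1 hiL1
            omega)
      _ = (L1:ℝ) * μ := by
          rw [Finset.sum_const, Finset.card_range, nsmul_eq_mul]
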